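/- Let $a_n \equiv 1$, $b_n \le b_{n+1} < 0$, and let $x \in (0,2)$. Let $p_n(x)$ be the orthonormal polynomials satisfying $p_{-1}=0$, $p_0=1$, $p_{n+1}(x) = (x - b_{n+1})p_n(x) - p_{n-1}(x)$. If $x - b_n \ge 2$ for all $n \le N$ and $\gamma_n \ge 0$ is defined by $x - b_n = 2\cosh(\gamma_n)$, then for $1 \le n < N$: $e^{\sum_{j=1}^n \gamma_j} \le p_n(x) \le (n+1) e^{\sum_{j=1}^n \gamma_j}$. -/
import Mathlib


theorem stmt_3 (b γ p : ℤ → ℝ) (N : ℤ) (x : ℝ)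
    (hb : ∀ n : ℤ, b n ≤ b (n + 1)) (hbneg : ∀ n : ℤ, b n < 0)
    (hx : 0 < x ∧ x < 2)
    (hforb : ∀ n ≤ N, 2 ≤ x - b n)
    (hγ : ∀ n ≤ N, 0 ≤ γ n ∧ x - b n = 2 * Real.cosh (γ n))
    (hpm1 : p (-1) = 0) (hp0 : p 0 = 1)
    (hrec : ∀ n : ℤ, 0 ≤ n → p (n + 1) = (x - b (n + 1)) * p n - p (n - 1)) :
    ∀ n : ℤ, 1 ≤ n → n < N →
      Real.exp (∑ j ∈ Finset.Icc 1 n, γ j) ≤ p n ∧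
      p n ≤ (n + 1) * Real.exp (∑ j ∈ Finset.Icc 1 n, γ j) := by
  obtain ⟨hx0, hx2⟩ := hx
  let S : ℤ → ℝ := fun n => ∑ j ∈ Finset.Icc 1 n, γ j
  have hSsucc : ∀ m : ℤ, 0 ≤ m → S (m + 1) = S m + γ (m + 1) := by
    intro m hm
    have hins : Finset.Icc (1:ℤ) (m + 1) = insert (m + 1) (Finset.Icc 1 m) := by
      ext j
      simp only [Finset.mem_Icc, Finset.mem_insert]
      omega
    have hnot : (m + 1) ∉ Finset.Icc (1:ℤ) m := by
      simp only [Finset.mem_Icc]; omega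
    show (∑ j ∈ Finset.Icc (1:ℤ) (m+1), γ j) = (∑ j ∈ Finset.Icc (1:ℤ) m, γ j) + γ (m+1)
    rw [hins, Finset.sum_insert hnot]
    ring
  have hγmono : ∀ m : ℤ, m + 1 ≤ N → γ (m + 1) ≤ γ m := by
    intro m hm
    obtain ⟨h1, e1⟩ := hγ m (by omega)
    obtain ⟨h2, e2⟩ := hγ (m + 1) hm
    have hcosh : Real.cosh (γ (m + 1)) ≤ Real.cosh (γ m) := by
      have := hb m
      nlinarith [e1, e2]
    have habs : |γ (m + 1)| ≤ |γ m| := Real.cosh_le_cosh.mp hcosh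
    rwa [abs_of_nonneg h2, abs_of_nonneg h1] at habs
  have key : ∀ k : ℕ, ∀ n : ℤ, n = 1 + (k : ℤ) → n ≤ N →
      0 ≤ p (n - 1) ∧
      Real.exp (γ n) * p (n - 1) ≤ p n ∧
      Real.exp (S n) ≤ p n ∧
      p n - Real.exp (-γ n) * p (n - 1) ≤ Real.exp (S n) ∧
      p n ≤ ((n : ℝ) + 1) * Real.exp (S n) := by
    intro k
    induction k with
    | zero =>
      intro n hn hN
      norm_num at hn
      subst hn
      have h0 : (1:ℤ) - 1 = 0 := by norm_num
      rw [h0]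
      obtain ⟨hγ1, he1⟩ := hγ 1 hN
      have hp1 : p 1 = 2 * Real.cosh (γ 1) := by
        have h := hrec 0 le_rfl
        norm_num at h
        rw [h, hp0, hpm1, he1]; ring
      have hS1 : S 1 = γ 1 := by
        show (∑ j ∈ Finset.Icc (1:ℤ) 1, γ j) = γ 1
        simp
      have hcosh := Real.cosh_eq (γ 1)
      have hexp1 := Real.exp_pos (γ 1)
      have hexp2 := Real.exp_pos (-γ 1)
      have hle : Real.exp (-γ 1) ≤ Real.exp (γ 1) :=
        Real.exp_le_exp.mpr (by linarith)
      rw [hS1, hp1, hp0, hcosh]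
      norm_num
      refine ⟨by nlinarith, by nlinarith, by nlinarith⟩
    | succ k ih =>
      intro n hn hN
      have hm1 : n - 1 = 1 + (k : ℤ) := by push_cast at hn; omega
      have hnpos : (1:ℤ) ≤ n - 1 := by omega
      obtain ⟨ih0, ih1, ih2, ih3, ih4⟩ := ih (n - 1) hm1 (by omega)
      have hfix : n - 1 + 1 = n := by ring
      obtain ⟨hγm, hem⟩ := hγ (n - 1) (by omega)
      obtain ⟨hγn, hen⟩ := hγ n hN
      have hmono : γ n ≤ γ (n - 1) := by
        have := hγmono (n - 1) (by omega)
        rwa [hfix] at this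
      have hreceq : p n = 2 * Real.cosh (γ n) * p (n - 1) - p (n - 1 - 1) := by
        have h := hrec (n - 1) (by omega)
        rw [hfix] at h
        rw [h, hen]
      have hcosh := Real.cosh_eq (γ n)
      have hSm1 : S n = S (n - 1) + γ n := by
        have := hSsucc (n - 1) (by omega)
        rwa [hfix] at this
      have hE1 : (0:ℝ) < Real.exp (γ n) := Real.exp_pos _
      have hE2 : (0:ℝ) < Real.exp (-γ n) := Real.exp_pos _
      have hES : (0:ℝ) < Real.exp (S (n - 1)) := Real.exp_pos _
      have hpm0 : 0 ≤ p (n - 1) := le_trans hES.le ih2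
      have hmul : Real.exp (γ n) * Real.exp (-γ n) = 1 := by
        rw [← Real.exp_add]; norm_num
      have hEmono : Real.exp (γ n) ≤ Real.exp (γ (n - 1)) :=
        Real.exp_le_exp.mpr hmono
      have hE1ge : Real.exp (-γ n) ≤ 1 := by
        rw [Real.exp_le_one_iff]; linarith
      have hESm1 : Real.exp (S n) = Real.exp (S (n - 1)) * Real.exp (γ n) := by
        rw [hSm1, Real.exp_add]
      have hstep : Real.exp (γ n) * p (n - 1 - 1) ≤ p (n - 1) := by
        calc Real.exp (γ n) * p (n - 1 - 1)
            ≤ Real.exp (γ (n - 1)) * p (n - 1 - 1) := by nlinarith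
          _ ≤ p (n - 1) := ih1
      have goal1 : Real.exp (γ n) * p (n - 1) ≤ p n := by
        rw [hreceq, hcosh]
        nlinarith [mul_le_mul_of_nonneg_left hstep hE2.le]
      have goal2 : Real.exp (S n) ≤ p n := by
        rw [hESm1]
        calc Real.exp (S (n - 1)) * Real.exp (γ n)
            ≤ Real.exp (γ n) * p (n - 1) := by nlinarith
          _ ≤ p n := goal1
      have goal3 : p n - Real.exp (-γ n) * p (n - 1) ≤ Real.exp (S n) := by
        have h1 : p n - Real.exp (-γ n) * p (n - 1)
            = Real.exp (γ n) * p (n - 1) - p (n - 1 - 1) := by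
          rw [hreceq, hcosh]; ring
        have h2 : Real.exp (γ n) * (p (n - 1) - Real.exp (-γ (n - 1)) * p (n - 1 - 1))
            ≤ Real.exp (γ n) * Real.exp (S (n - 1)) :=
          mul_le_mul_of_nonneg_left ih3 hE1.le
        have h3 : Real.exp (γ n) * Real.exp (-γ (n - 1)) ≤ 1 := by
          rw [← Real.exp_add, Real.exp_le_one_iff]; linarith
        have h2' : Real.exp (γ n) * p (n - 1)
            - Real.exp (γ n) * Real.exp (-γ (n - 1)) * p (n - 1 - 1)
            ≤ Real.exp (γ n) * Real.exp (S (n - 1)) := by linarith [h2]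
        have h4 : Real.exp (γ n) * Real.exp (-γ (n - 1)) * p (n - 1 - 1)
            ≤ p (n - 1 - 1) := by
          calc Real.exp (γ n) * Real.exp (-γ (n - 1)) * p (n - 1 - 1)
              ≤ 1 * p (n - 1 - 1) := mul_le_mul_of_nonneg_right h3 ih0
            _ = p (n - 1 - 1) := one_mul _
        rw [h1, hESm1]
        linarith
      have goal4 : p n ≤ ((n : ℝ) + 1) * Real.exp (S n) := by
        have h1 : p n ≤ p (n - 1) + Real.exp (S n) := by
          have h5 : Real.exp (-γ n) * p (n - 1) ≤ 1 * p (n - 1) :=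
            mul_le_mul_of_nonneg_right hE1ge hpm0
          linarith [goal3]
        have h2 : Real.exp (S (n - 1)) ≤ Real.exp (S n) := by
          rw [Real.exp_le_exp, hSm1]; linarith
        have ih4' : p (n - 1) ≤ ((n:ℝ)) * Real.exp (S (n - 1)) := by
          have hc : ((n - 1 : ℤ) : ℝ) + 1 = (n:ℝ) := by push_cast; ring
          rw [← hc]; exact ih4
        have h6 : ((n:ℝ)) * Real.exp (S (n - 1)) ≤ ((n:ℝ)) * Real.exp (S n) := by
          apply mul_le_mul_of_nonneg_left h2
          have : (0:ℤ) ≤ n := by omega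
          exact_mod_cast this
        linarith
      exact ⟨hpm0, goal1, goal2, goal3, goal4⟩
  intro n h1n hnN
  obtain ⟨k, hkeq⟩ : ∃ k : ℕ, (k : ℤ) = n - 1 :=
    ⟨(n - 1).toNat, Int.toNat_of_nonneg (by omega)⟩
  have := key k n (by omega) (by omega)
  exact ⟨this.2.2.1, this.2.2.2.2⟩
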